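/- Let m ≥ 0, E ∈ ℝ, and let u = (u₁,u₂) : [−1,1] → ℂ² be continuously differentiable, not identically zero, satisfy the infinite mass boundary conditions, and satisfy −u₂′(t) + m·u₁(t) = E·u₁(t) and u₁′(t) − m·u₂(t) = E·u₂(t) for all t ∈ [−1,1]. Then there exists k > 0 such that m·sin(2k) + k·cos(2k) = 0 and E² = m² + k². -/

import Mathlib

open MeasureTheory Set

lemma constOnIcc (f : ℝ → ℂ)
    (hf : ∀ t ∈ Icc (-1 : ℝ) 1, HasDerivWithinAt f 0 (Icc (-1 : ℝ) 1) t) :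
    ∀ t ∈ Icc (-1 : ℝ) 1, f t = f (-1) := by
  intro t ht
  have h := Convex.norm_image_sub_le_of_norm_hasDerivWithin_le
    (f := f) (f' := fun _ => 0) (C := 0) (fun x hx => hf x hx)
    (fun x _ => by simp) (convex_Icc _ _) (left_mem_Icc.2 (by norm_num)) ht
  have : ‖f t - f (-1)‖ ≤ 0 := by simpa using h
  have := le_antisymm this (norm_nonneg _)
  rwa [norm_eq_zero, sub_eq_zero] at this

lemma affineOnIcc (f : ℝ → ℂ) (f' : ℝ → ℂ) (c : ℂ)
    (hf : ∀ t ∈ Icc (-1 : ℝ) 1, HasDerivWithinAt f (f' t) (Icc (-1 : ℝ) 1) t)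
    (hc : ∀ t ∈ Icc (-1 : ℝ) 1, f' t = c) :
    ∀ t ∈ Icc (-1 : ℝ) 1, f t = f (-1) + c * (t + 1) := by
  have key : ∀ t ∈ Icc (-1 : ℝ) 1, (fun s : ℝ => f s - c * s) t = (fun s : ℝ => f s - c * s) (-1) := by
    apply constOnIcc
    intro t ht
    have h1 : HasDerivWithinAt (fun s : ℝ => c * (s : ℂ)) c (Icc (-1 : ℝ) 1) t := by
      simpa using (((hasDerivAt_id t).ofReal_comp).const_mul c).hasDerivWithinAt
    have := (hf t ht).sub h1
    rwa [hc t ht, sub_self] at this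
  intro t ht
  have := key t ht
  simp only at this
  push_cast at this ⊢
  linear_combination this

lemma edgeCaseEqM (m E : ℝ) (hm : 0 ≤ m) (u₁ u₂ u₁' u₂' : ℝ → ℂ)
    (hu₁ : ∀ t ∈ Icc (-1 : ℝ) 1, HasDerivWithinAt u₁ (u₁' t) (Icc (-1 : ℝ) 1) t)
    (hu₂ : ∀ t ∈ Icc (-1 : ℝ) 1, HasDerivWithinAt u₂ (u₂' t) (Icc (-1 : ℝ) 1) t)
    (hne : ∃ t ∈ Icc (-1 : ℝ) 1, ¬(u₁ t = 0 ∧ u₂ t = 0))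
    (hbc1 : u₂ 1 = -u₁ 1) (hbc2 : u₂ (-1) = u₁ (-1))
    (hd1 : ∀ t ∈ Icc (-1 : ℝ) 1, u₁' t = ((E:ℂ) + m) * u₂ t)
    (hd2 : ∀ t ∈ Icc (-1 : ℝ) 1, u₂' t = ((m:ℂ) - E) * u₁ t)
    (hEm : E = m) : False := by
  have hEmC : (E:ℂ) = (m:ℂ) := by exact_mod_cast hEm
  rw [hEmC] at hd1 hd2
  obtain ⟨t₀, ht₀, hnz⟩ := hne
  have hmem1 : (1:ℝ) ∈ Icc (-1:ℝ) 1 := by norm_num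
  have hmemm1 : (-1:ℝ) ∈ Icc (-1:ℝ) 1 := by norm_num
  have hu2c : ∀ t ∈ Icc (-1:ℝ) 1, u₂ t = u₂ (-1) := by
    apply constOnIcc
    intro t ht
    have h := hu₂ t ht
    rw [hd2 t ht] at h
    simpa using h
  have hu1a : ∀ t ∈ Icc (-1:ℝ) 1, u₁ t = u₁ (-1) + (((m:ℂ)+m) * u₂ (-1)) * (t+1) := by
    apply affineOnIcc u₁ u₁'
    · exact hu₁
    · intro t ht; rw [hd1 t ht, hu2c t ht]
  have e1 : u₂ 1 = u₂ (-1) := hu2c 1 hmem1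
  have e2 : u₁ 1 = u₁ (-1) + (((m:ℂ)+m) * u₂ (-1)) * 2 := by
    have h := hu1a 1 hmem1; push_cast at h; linear_combination h
  have ha : u₁ (-1) * (2 + 4*(m:ℂ)) = 0 := by
    linear_combination hbc1 - e1 - ((1:ℂ)+4*m)*hbc2 - e2
  have hm0 : (2 + 4*(m:ℂ)) ≠ 0 := by
    intro h
    have : (2 + 4*m : ℝ) = 0 := by exact_mod_cast h
    linarith
  have ha0 : u₁ (-1) = 0 := by
    rcases mul_eq_zero.1 ha with h | h
    · exact h
    · exact absurd h hm0
  have hu2z : u₂ t₀ = 0 := by rw [hu2c t₀ ht₀, hbc2, ha0]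
  have hu1z : u₁ t₀ = 0 := by
    rw [hu1a t₀ ht₀, ha0, hbc2, ha0]; ring
  exact hnz ⟨hu1z, hu2z⟩

lemma edgeCaseEqNegM (m E : ℝ) (hm : 0 ≤ m) (u₁ u₂ u₁' u₂' : ℝ → ℂ)
    (hu₁ : ∀ t ∈ Icc (-1 : ℝ) 1, HasDerivWithinAt u₁ (u₁' t) (Icc (-1 : ℝ) 1) t)
    (hu₂ : ∀ t ∈ Icc (-1 : ℝ) 1, HasDerivWithinAt u₂ (u₂' t) (Icc (-1 : ℝ) 1) t)
    (hne : ∃ t ∈ Icc (-1 : ℝ) 1, ¬(u₁ t = 0 ∧ u₂ t = 0))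
    (hbc1 : u₂ 1 = -u₁ 1) (hbc2 : u₂ (-1) = u₁ (-1))
    (hd1 : ∀ t ∈ Icc (-1 : ℝ) 1, u₁' t = ((E:ℂ) + m) * u₂ t)
    (hd2 : ∀ t ∈ Icc (-1 : ℝ) 1, u₂' t = ((m:ℂ) - E) * u₁ t)
    (hEm : E = -m) : False := by
  have hEmC : (E:ℂ) = -(m:ℂ) := by exact_mod_cast hEm
  rw [hEmC] at hd1 hd2
  obtain ⟨t₀, ht₀, hnz⟩ := hne
  have hmem1 : (1:ℝ) ∈ Icc (-1:ℝ) 1 := by norm_num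
  have hu1c : ∀ t ∈ Icc (-1:ℝ) 1, u₁ t = u₁ (-1) := by
    apply constOnIcc
    intro t ht
    have h := hu₁ t ht
    rw [hd1 t ht] at h
    simpa using h
  have hu2a : ∀ t ∈ Icc (-1:ℝ) 1, u₂ t = u₂ (-1) + (((m:ℂ)+m) * u₁ (-1)) * (t+1) := by
    apply affineOnIcc u₂ u₂'
    · exact hu₂
    · intro t ht; rw [hd2 t ht, hu1c t ht]; ring
  have e1 : u₁ 1 = u₁ (-1) := hu1c 1 hmem1
  have e2 : u₂ 1 = u₂ (-1) + (((m:ℂ)+m) * u₁ (-1)) * 2 := by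
    have h := hu2a 1 hmem1; push_cast at h; linear_combination h
  have ha : u₁ (-1) * (2 + 4*(m:ℂ)) = 0 := by
    linear_combination hbc1 - hbc2 - e1 - e2
  have hm0 : (2 + 4*(m:ℂ)) ≠ 0 := by
    intro h
    have : (2 + 4*m : ℝ) = 0 := by exact_mod_cast h
    linarith
  have ha0 : u₁ (-1) = 0 := by
    rcases mul_eq_zero.1 ha with h | h
    · exact h
    · exact absurd h hm0
  have hu1z : u₁ t₀ = 0 := by rw [hu1c t₀ ht₀, ha0]
  have hu2z : u₂ t₀ = 0 := by
    rw [hu2a t₀ ht₀, ha0]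
    have h2 : u₂ (-1) = 0 := by rw [hbc2, ha0]
    rw [h2]; ring
  exact hnz ⟨hu1z, hu2z⟩

lemma mainCaseDispersion (m E : ℝ) (hm : 0 ≤ m) (u₁ u₂ u₁' u₂' : ℝ → ℂ)
    (hu₁ : ∀ t ∈ Icc (-1 : ℝ) 1, HasDerivWithinAt u₁ (u₁' t) (Icc (-1 : ℝ) 1) t)
    (hu₂ : ∀ t ∈ Icc (-1 : ℝ) 1, HasDerivWithinAt u₂ (u₂' t) (Icc (-1 : ℝ) 1) t)
    (hne : ∃ t ∈ Icc (-1 : ℝ) 1, ¬(u₁ t = 0 ∧ u₂ t = 0))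
    (hbc1 : u₂ 1 = -u₁ 1) (hbc2 : u₂ (-1) = u₁ (-1))
    (hd1 : ∀ t ∈ Icc (-1 : ℝ) 1, u₁' t = ((E:ℂ) + m) * u₂ t)
    (hd2 : ∀ t ∈ Icc (-1 : ℝ) 1, u₂' t = ((m:ℂ) - E) * u₁ t)
    (hε : (E:ℂ) + m ≠ 0) (hμ : (m:ℂ) - E ≠ 0) :
    ∃ k : ℝ, 0 < k ∧ m * Real.sin (2 * k) + k * Real.cos (2 * k) = 0 ∧
      E ^ 2 = m ^ 2 + k ^ 2 := by
  have hmem1 : (1:ℝ) ∈ Icc (-1:ℝ) 1 := by norm_num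
  have hmemm1 : (-1:ℝ) ∈ Icc (-1:ℝ) 1 := by norm_num
  have hεμ0 : (E:ℂ)^2 - (m:ℂ)^2 ≠ 0 := by
    have : (E:ℂ)^2 - (m:ℂ)^2 = -(((E:ℂ)+m) * ((m:ℂ)-E)) := by ring
    rw [this]; exact neg_ne_zero.2 (mul_ne_zero hε hμ)
  set K : ℂ := ((E:ℂ)^2 - (m:ℂ)^2) ^ (((2:ℕ):ℂ))⁻¹ with hKdef
  have hK2 : K^2 = (E:ℂ)^2 - (m:ℂ)^2 := Complex.cpow_nat_inv_pow _ (by norm_num)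
  have hK0 : K ≠ 0 := by
    intro h; apply hεμ0; rw [← hK2, h]; ring
  have hcos : ∀ t : ℝ, HasDerivWithinAt (fun s : ℝ => Complex.cos (K*s))
      (-(K * Complex.sin (K*t))) (Icc (-1:ℝ) 1) t := by
    intro t
    have hg : HasDerivAt (fun z : ℂ => K * z) K (t:ℂ) := by
      simpa using (hasDerivAt_id (t:ℂ)).const_mul K
    have h1 : HasDerivAt (fun z : ℂ => Complex.cos (K*z)) (-Complex.sin (K*t) * K) (t:ℂ) :=
      (Complex.hasDerivAt_cos (K*(t:ℂ))).comp (t:ℂ) hg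
    have h2 := h1.comp_ofReal
    simpa [mul_comm] using h2.hasDerivWithinAt
  have hsin : ∀ t : ℝ, HasDerivWithinAt (fun s : ℝ => Complex.sin (K*s))
      (K * Complex.cos (K*t)) (Icc (-1:ℝ) 1) t := by
    intro t
    have hg : HasDerivAt (fun z : ℂ => K * z) K (t:ℂ) := by
      simpa using (hasDerivAt_id (t:ℂ)).const_mul K
    have h1 : HasDerivAt (fun z : ℂ => Complex.sin (K*z)) (Complex.cos (K*t) * K) (t:ℂ) :=
      (Complex.hasDerivAt_sin (K*(t:ℂ))).comp (t:ℂ) hg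
    have h2 := h1.comp_ofReal
    simpa [mul_comm] using h2.hasDerivWithinAt
  -- the two invariants (scaled: no division)
  have hFc : ∀ t ∈ Icc (-1:ℝ) 1,
      HasDerivWithinAt (fun s : ℝ => ((m:ℂ)-E) * (Complex.cos (K*s) * u₁ s) + K * (Complex.sin (K*s) * u₂ s))
        0 (Icc (-1:ℝ) 1) t := by
    intro t ht
    have h := (((hcos t).mul (hu₁ t ht)).const_mul ((m:ℂ)-E)).add
      (((hsin t).mul (hu₂ t ht)).const_mul K)
    convert h using 1
    case e'_4 => rfl
    case e'_8 => rfl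
    rw [hd1 t ht, hd2 t ht]
    linear_combination (-(Complex.cos (K*t)) * u₂ t) * hK2
  have hFs : ∀ t ∈ Icc (-1:ℝ) 1,
      HasDerivWithinAt (fun s : ℝ => ((m:ℂ)-E) * (Complex.sin (K*s) * u₁ s) - K * (Complex.cos (K*s) * u₂ s))
        0 (Icc (-1:ℝ) 1) t := by
    intro t ht
    have h := (((hsin t).mul (hu₁ t ht)).const_mul ((m:ℂ)-E)).sub
      (((hcos t).mul (hu₂ t ht)).const_mul K)
    convert h using 1
    case e'_4 => rfl
    case e'_8 => rfl
    rw [hd1 t ht, hd2 t ht]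
    linear_combination (-(Complex.sin (K*t)) * u₂ t) * hK2
  have hFcA : ∀ t ∈ Icc (-1:ℝ) 1,
      ((m:ℂ)-E) * (Complex.cos (K*t) * u₁ t) + K * (Complex.sin (K*t) * u₂ t) =
      ((m:ℂ)-E) * (Complex.cos (K*(-1:ℝ)) * u₁ (-1)) + K * (Complex.sin (K*(-1:ℝ)) * u₂ (-1)) :=
    constOnIcc _ hFc
  have hFsB : ∀ t ∈ Icc (-1:ℝ) 1,
      ((m:ℂ)-E) * (Complex.sin (K*t) * u₁ t) - K * (Complex.cos (K*t) * u₂ t) =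
      ((m:ℂ)-E) * (Complex.sin (K*(-1:ℝ)) * u₁ (-1)) - K * (Complex.cos (K*(-1:ℝ)) * u₂ (-1)) :=
    constOnIcc _ hFs
  set A : ℂ := ((m:ℂ)-E) * (Complex.cos (K*(-1:ℝ)) * u₁ (-1)) + K * (Complex.sin (K*(-1:ℝ)) * u₂ (-1)) with hAdef
  set B : ℂ := ((m:ℂ)-E) * (Complex.sin (K*(-1:ℝ)) * u₁ (-1)) - K * (Complex.cos (K*(-1:ℝ)) * u₂ (-1)) with hBdef
  have hpy : ∀ t : ℝ, Complex.sin (K*t)^2 + Complex.cos (K*t)^2 = 1 :=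
    fun t => Complex.sin_sq_add_cos_sq _
  have hrep1 : ∀ t ∈ Icc (-1:ℝ) 1,
      ((m:ℂ)-E) * u₁ t = Complex.cos (K*t) * A + Complex.sin (K*t) * B := by
    intro t ht
    linear_combination Complex.cos (K*t) * (hFcA t ht) + Complex.sin (K*t) * (hFsB t ht) -
      ((m:ℂ)-E) * u₁ t * (hpy t)
  have hrep2 : ∀ t ∈ Icc (-1:ℝ) 1,
      K * u₂ t = Complex.sin (K*t) * A - Complex.cos (K*t) * B := by
    intro t ht
    linear_combination Complex.sin (K*t) * (hFcA t ht) - Complex.cos (K*t) * (hFsB t ht) -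
      K * u₂ t * (hpy t)
  have hAB : ¬(A = 0 ∧ B = 0) := by
    rintro ⟨hA0, hB0⟩
    obtain ⟨t₀, ht₀, hnz⟩ := hne
    apply hnz
    have r1 := hrep1 t₀ ht₀
    have r2 := hrep2 t₀ ht₀
    rw [hA0, hB0] at r1 r2
    constructor
    · have : ((m:ℂ)-E) * u₁ t₀ = 0 := by rw [r1]; ring
      rcases mul_eq_zero.1 this with h' | h'
      · exact absurd h' hμ
      · exact h'
    · have : K * u₂ t₀ = 0 := by rw [r2]; ring
      rcases mul_eq_zero.1 this with h' | h'
      · exact absurd h' hK0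
      · exact h'
  have hKm1 : K * ((-1:ℝ):ℂ) = -(K * ((1:ℝ):ℂ)) := by push_cast; ring
  have h1 := hrep1 1 hmem1
  have h2 := hrep2 1 hmem1
  have h3 := hrep1 (-1) hmemm1
  have h4 := hrep2 (-1) hmemm1
  rw [hKm1, Complex.cos_neg, Complex.sin_neg] at h3 h4
  rw [hbc1] at h2
  rw [hbc2] at h4
  have hA1 : A * (((m:ℂ)-E) * Complex.sin (K*(1:ℝ)) + K * Complex.cos (K*(1:ℝ))) = 0 := by
    linear_combination (-(K:ℂ)/2) * h1 + (-((m:ℂ)-E)/2) * h2 + (-(K:ℂ)/2) * h3 + (((m:ℂ)-E)/2) * h4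
  have hB1 : B * (((m:ℂ)-E) * Complex.cos (K*(1:ℝ)) - K * Complex.sin (K*(1:ℝ))) = 0 := by
    linear_combination ((K:ℂ)/2) * h1 + (((m:ℂ)-E)/2) * h2 + (-(K:ℂ)/2) * h3 + (((m:ℂ)-E)/2) * h4
  rw [show K * ((1:ℝ):ℂ) = K by push_cast; ring] at hA1 hB1
  have hdisp : ((m:ℂ)-E) * Complex.sin K + K * Complex.cos K = 0 ∨
      ((m:ℂ)-E) * Complex.cos K - K * Complex.sin K = 0 := by
    by_cases hA0 : A = 0
    · by_cases hB0 : B = 0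
      · exact absurd ⟨hA0, hB0⟩ hAB
      · right
        rcases mul_eq_zero.1 hB1 with h | h
        · exact absurd h hB0
        · exact h
    · left
      rcases mul_eq_zero.1 hA1 with h | h
      · exact absurd h hA0
      · exact h
  -- rule out E² ≤ m²
  have hE2 : m^2 < E^2 := by
    rcases lt_trichotomy (E^2) (m^2) with hlt | heq | hgt
    · exfalso
      set κ : ℝ := Real.sqrt (m^2 - E^2) with hκdef
      have hκpos : 0 < κ := Real.sqrt_pos.2 (by linarith)
      have hκ2 : κ^2 = m^2 - E^2 := Real.sq_sqrt (by linarith)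
      have hκ2C : ((κ:ℂ))^2 = (m:ℂ)^2 - (E:ℂ)^2 := by
        have h := congrArg (fun x : ℝ => (x : ℂ)) hκ2
        push_cast at h
        exact h
      have hKI : K = (κ:ℂ) * Complex.I ∨ K = -((κ:ℂ) * Complex.I) := by
        have hz : (K - (κ:ℂ) * Complex.I) * (K + (κ:ℂ) * Complex.I) = 0 := by
          linear_combination hK2 + hκ2C - (κ:ℂ)^2 * Complex.I_sq
        rcases mul_eq_zero.1 hz with h | h
        · left; exact sub_eq_zero.1 h
        · right; exact eq_neg_of_add_eq_zero_left h
      have hmE : 0 < m - E := by nlinarith [sq_nonneg (m + E)]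
      have hsinh : 0 < Real.sinh κ := Real.sinh_pos_iff.2 hκpos
      have hcosh : 0 < Real.cosh κ := Real.cosh_pos κ
      rcases hdisp with hd | hd
      · have hre : ((m - E) * Real.sinh κ + κ * Real.cosh κ : ℝ) = 0 := by
          have key : ((((m - E) * Real.sinh κ + κ * Real.cosh κ : ℝ)):ℂ) * Complex.I = 0 := by
            rcases hKI with hKc | hKc
            · rw [hKc, Complex.sin_mul_I, Complex.cos_mul_I] at hd
              push_cast
              linear_combination hd
            · rw [hKc, neg_mul, Complex.sin_neg, Complex.cos_neg,
                Complex.sin_mul_I, Complex.cos_mul_I] at hd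
              push_cast
              linear_combination -hd
          rcases mul_eq_zero.1 key with h | h
          · exact_mod_cast h
          · exact absurd h Complex.I_ne_zero
        nlinarith [mul_pos hmE hsinh, mul_pos hκpos hcosh]
      · have hre : ((m - E) * Real.cosh κ + κ * Real.sinh κ : ℝ) = 0 := by
          have key : ((((m - E) * Real.cosh κ + κ * Real.sinh κ : ℝ)):ℂ) = 0 := by
            rcases hKI with hKc | hKc
            · rw [hKc, Complex.sin_mul_I, Complex.cos_mul_I] at hd
              push_cast
              linear_combination hd + (κ:ℂ) * Complex.sinh (κ:ℂ) * Complex.I_sq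
            · rw [hKc, neg_mul, Complex.sin_neg, Complex.cos_neg,
                Complex.sin_mul_I, Complex.cos_mul_I] at hd
              push_cast
              linear_combination hd + (κ:ℂ) * Complex.sinh (κ:ℂ) * Complex.I_sq
          exact_mod_cast key
        nlinarith [mul_pos hmE hcosh, mul_pos hκpos hsinh]
    · exfalso
      apply hεμ0
      have h : ((E^2 - m^2 : ℝ) : ℂ) = 0 := by rw [heq]; simp
      push_cast at h
      linear_combination h
    · exact hgt
  -- the oscillatory regime
  set k : ℝ := Real.sqrt (E^2 - m^2) with hkdef
  have hkpos : 0 < k := Real.sqrt_pos.2 (by linarith)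
  have hk2 : k^2 = E^2 - m^2 := Real.sq_sqrt (by linarith)
  have hk2C : ((k:ℂ))^2 = (E:ℂ)^2 - (m:ℂ)^2 := by
    have h := congrArg (fun x : ℝ => (x : ℂ)) hk2
    push_cast at h
    exact h
  have hKk : K = (k:ℂ) ∨ K = -((k:ℂ)) := by
    have hz : (K - (k:ℂ)) * (K + (k:ℂ)) = 0 := by
      linear_combination hK2 - hk2C
    rcases mul_eq_zero.1 hz with h | h
    · left; exact sub_eq_zero.1 h
    · right; exact eq_neg_of_add_eq_zero_left h
  have hreal : (m - E) * Real.sin k + k * Real.cos k = 0 ∨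
      (m - E) * Real.cos k - k * Real.sin k = 0 := by
    rcases hdisp with hd | hd
    · left
      have key : (((m - E) * Real.sin k + k * Real.cos k : ℝ) : ℂ) = 0 := by
        rcases hKk with hKc | hKc
        · rw [hKc] at hd
          push_cast
          linear_combination hd
        · rw [hKc, Complex.sin_neg, Complex.cos_neg] at hd
          push_cast
          linear_combination -hd
      exact_mod_cast key
    · right
      have key : (((m - E) * Real.cos k - k * Real.sin k : ℝ) : ℂ) = 0 := by
        rcases hKk with hKc | hKc
        · rw [hKc] at hd
          push_cast
          linear_combination hd
        · rw [hKc, Complex.sin_neg, Complex.cos_neg] at hd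
          push_cast
          linear_combination hd
      exact_mod_cast key
  refine ⟨k, hkpos, ?_, by linarith⟩
  rw [Real.sin_two_mul, Real.cos_two_mul]
  have hpyr : Real.sin k^2 + Real.cos k^2 = 1 := Real.sin_sq_add_cos_sq k
  have hkne : k ≠ 0 := ne_of_gt hkpos
  rcases hreal with hre | hre
  · have key : k * (2*m*Real.sin k*Real.cos k + k*Real.cos k^2 - k*Real.sin k^2) = 0 := by
      linear_combination ((E+m)*Real.sin k + k*Real.cos k) * hre - Real.sin k^2 * hk2
    have key2 : 2*m*Real.sin k*Real.cos k + k*Real.cos k^2 - k*Real.sin k^2 = 0 := by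
      rcases mul_eq_zero.1 key with h | h
      · exact absurd h hkne
      · exact h
    linear_combination key2 + k * hpyr
  · have key : k * (2*m*Real.sin k*Real.cos k + k*Real.cos k^2 - k*Real.sin k^2) = 0 := by
      linear_combination (k*Real.sin k - (m+E)*Real.cos k) * hre + Real.cos k^2 * hk2
    have key2 : 2*m*Real.sin k*Real.cos k + k*Real.cos k^2 - k*Real.sin k^2 = 0 := by
      rcases mul_eq_zero.1 key with h | h
      · exact absurd h hkne
      · exact h
    linear_combination key2 + k * hpyr

/-- Any eigenvalue `E` of the transverse Dirac operator `T(m)` with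
infinite mass boundary conditions (with a nontrivial continuously differentiable
eigenfunction) satisfies `E² = m² + k²` for some `k > 0` with
`m·sin(2k) + k·cos(2k) = 0`. -/
theorem transverse_eigenvalue_dispersion
    (m E : ℝ) (hm : 0 ≤ m) (u₁ u₂ u₁' u₂' : ℝ → ℂ)
    (hu₁ : ∀ t ∈ Icc (-1 : ℝ) 1, HasDerivWithinAt u₁ (u₁' t) (Icc (-1 : ℝ) 1) t)
    (hu₂ : ∀ t ∈ Icc (-1 : ℝ) 1, HasDerivWithinAt u₂ (u₂' t) (Icc (-1 : ℝ) 1) t)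
    (hc₁ : ContinuousOn u₁' (Icc (-1 : ℝ) 1))
    (hc₂ : ContinuousOn u₂' (Icc (-1 : ℝ) 1))
    (hne : ∃ t ∈ Icc (-1 : ℝ) 1, ¬(u₁ t = 0 ∧ u₂ t = 0))
    (hbc1 : u₂ 1 = -u₁ 1) (hbc2 : u₂ (-1) = u₁ (-1))
    (heig : ∀ t ∈ Icc (-1 : ℝ) 1,
      -u₂' t + (m : ℂ) * u₁ t = (E : ℂ) * u₁ t ∧
      u₁' t - (m : ℂ) * u₂ t = (E : ℂ) * u₂ t) :
    ∃ k : ℝ, 0 < k ∧ m * Real.sin (2 * k) + k * Real.cos (2 * k) = 0 ∧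
      E ^ 2 = m ^ 2 + k ^ 2 := by
  have hd1 : ∀ t ∈ Icc (-1 : ℝ) 1, u₁' t = ((E:ℂ) + m) * u₂ t := by
    intro t ht
    linear_combination (heig t ht).2
  have hd2 : ∀ t ∈ Icc (-1 : ℝ) 1, u₂' t = ((m:ℂ) - E) * u₁ t := by
    intro t ht
    linear_combination -(heig t ht).1
  by_cases hc1 : E = m
  · exact (edgeCaseEqM m E hm u₁ u₂ u₁' u₂' hu₁ hu₂ hne hbc1 hbc2 hd1 hd2 hc1).elim
  by_cases hc2 : E = -m
  · exact (edgeCaseEqNegM m E hm u₁ u₂ u₁' u₂' hu₁ hu₂ hne hbc1 hbc2 hd1 hd2 hc2).elim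
  have hε : (E:ℂ) + m ≠ 0 := by
    intro h
    apply hc2
    have : (E + m : ℝ) = 0 := by exact_mod_cast h
    linarith
  have hμ : (m:ℂ) - E ≠ 0 := by
    intro h
    apply hc1
    have : (m - E : ℝ) = 0 := by exact_mod_cast h
    linarith
  exact mainCaseDispersion m E hm u₁ u₂ u₁' u₂' hu₁ hu₂ hne hbc1 hbc2 hd1 hd2 hε hμ
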